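/- Let p > 0 be odd and q an integer coprime to p. The parametrized arc t ↦ (qt, (q−p)t) for t ∈ [0, π], considered in the pillowcase P = ℝ²/(ℤ²⋉ℤ/2), meets the diagonal arc Δ = { (γ, γ) : γ ∈ [0,π] } in exactly (p+1)/2 points, namely at the parameter values t = 2πℓ/p for ℓ = 0, 1, …, (p−1)/2. -/

import Mathlib

open Real

/-- The relation on `ℝ²` whose quotient is the pillowcase `P = ℝ²/(ℤ²⋉ℤ/2)`:
two points are related iff they differ by translations by `2π` in each coordinate,
possibly composed with the involution `(γ,θ) ↦ (−γ,−θ)`. -/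
def pillowRel (x y : ℝ × ℝ) : Prop :=
  ∃ m n : ℤ, y = (x.1 + 2 * π * m, x.2 + 2 * π * n) ∨
             y = (-x.1 + 2 * π * m, -x.2 + 2 * π * n)

private lemma forward_aux (p : ℤ) (hp : 0 < p) (hodd : Odd p) (t : ℝ)
    (ht0 : 0 ≤ t) (htπ : t ≤ π) (k : ℤ) (hk : (p : ℝ) * t = 2 * π * k) :
    ∃ ℓ : ℕ, (ℓ : ℤ) ≤ (p - 1) / 2 ∧ t = 2 * π * ℓ / p := by
  have hπ := Real.pi_pos
  have hp0 : (0:ℝ) < (p:ℝ) := by exact_mod_cast hp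
  have hk0 : 0 ≤ k := by
    by_contra h
    push_neg at h
    have hkr : (k:ℝ) < 0 := by exact_mod_cast h
    nlinarith [mul_nonneg hp0.le ht0]
  have h2k : 2 * k ≤ p := by
    have hpt : (p:ℝ) * t ≤ (p:ℝ) * π := by nlinarith
    have : 2 * (k:ℝ) ≤ (p:ℝ) := by nlinarith
    exact_mod_cast this
  refine ⟨k.toNat, ?_, ?_⟩
  · obtain ⟨r, hr⟩ := hodd
    omega
  · have hcast : ((k.toNat : ℕ) : ℝ) = (k : ℝ) := by exact_mod_cast Int.toNat_of_nonneg hk0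
    rw [hcast, eq_div_iff hp0.ne']
    linarith [hk]

private lemma backward_aux (x d : ℝ) (ℓ : ℤ) (hd : d = x - 2 * π * ℓ) :
    ∃ γ ∈ Set.Icc (0:ℝ) π, pillowRel (x, d) (γ, γ) := by
  have hπ := Real.pi_pos
  have h2π : (0:ℝ) < 2 * π := by linarith
  set m : ℤ := ⌊x / (2 * π)⌋ with hm
  have hr0 : 0 ≤ x - (m : ℝ) * (2 * π) := Int.sub_floor_div_mul_nonneg x h2π
  have hr2 : x - (m : ℝ) * (2 * π) < 2 * π := Int.sub_floor_div_mul_lt x h2π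
  subst hd
  by_cases hcase : x - (m : ℝ) * (2 * π) ≤ π
  · refine ⟨x - (m : ℝ) * (2 * π), ⟨hr0, hcase⟩, -m, ℓ - m, Or.inl ?_⟩
    simp only [Prod.mk.injEq]
    constructor <;> (push_cast; ring)
  · refine ⟨2 * π - (x - (m : ℝ) * (2 * π)), ⟨by linarith, by linarith⟩,
      m + 1, m + 1 - ℓ, Or.inr ?_⟩
    simp only [Prod.mk.injEq]
    constructor <;> (push_cast; ring)

/-- **Intersections of the 2-bridge arc with the diagonal.**  Let `p > 0` be odd and
`q` coprime to `p`.  The arc `t ↦ (qt, (q−p)t)`, `t ∈ [0,π]`, considered in the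
pillowcase, meets the diagonal arc `Δ = {(γ,γ) : γ ∈ [0,π]}` exactly at the parameter
values `t = 2πℓ/p` for `ℓ = 0, 1, …, (p−1)/2` (hence in exactly `(p+1)/2` points). -/
theorem two_bridge_diagonal_intersections (p q : ℤ)
    (hp : 0 < p) (hodd : Odd p) (hcop : IsCoprime p q) :
    ∀ t ∈ Set.Icc (0 : ℝ) π,
      ((∃ γ ∈ Set.Icc (0 : ℝ) π,
          pillowRel ((q : ℝ) * t, ((q : ℝ) - (p : ℝ)) * t) (γ, γ)) ↔
        (∃ ℓ : ℕ, (ℓ : ℤ) ≤ (p - 1) / 2 ∧ t = 2 * π * ℓ / p)) := by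
  intro t ht
  obtain ⟨ht0, htπ⟩ := ht
  have hπ := Real.pi_pos
  have hp0 : (0:ℝ) < (p:ℝ) := by exact_mod_cast hp
  constructor
  · rintro ⟨γ, ⟨hγ0, hγπ⟩, m, n, h | h⟩ <;> simp only at h <;>
      simp only [Prod.mk.injEq] at h <;> obtain ⟨h1, h2⟩ := h
    · refine forward_aux p hp hodd t ht0 htπ (n - m) ?_
      push_cast
      linear_combination h2 - h1
    · refine forward_aux p hp hodd t ht0 htπ (m - n) ?_
      push_cast
      linear_combination h1 - h2
  · rintro ⟨ℓ, hℓ, rfl⟩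
    refine backward_aux _ _ (ℓ : ℤ) ?_
    have hne : (p:ℝ) ≠ 0 := hp0.ne'
    field_simp
    push_cast
    ring
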